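/- For the error dynamics ė = A e + B Λ Ω̃ᵀ(t) ξ(t) − B Ω̃_Δᵀ(t) ξ_Δ(t) with A Hurwitz admitting P = Pᵀ > 0 satisfying AᵀP + PA = −Q < 0 and PB = CᵀSᵀ, the adaptive laws Ω̇ = −Γ_Ω ξ (S C e)ᵀ and Ω̇_Δ = Γ_Δ ξ_Δ (S C e)ᵀ (with Γ_Ω, Γ_Δ symmetric positive definite, Λ diagonal positive definite constant) make V = eᵀPe + tr(Ω̃ᵀΓ_Ω^{-1}Ω̃ Λ) + tr(Ω̃_ΔᵀΓ_Δ^{-1}Ω̃_Δ) satisfy V̇ = −eᵀQe ≤ 0 along trajectories. -/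

import Mathlib

open Matrix
open scoped BigOperators

private lemma dp_helper {a b c : ℕ} (M : Matrix (Fin a) (Fin b) ℝ)
    (N : Matrix (Fin a) (Fin c) ℝ) (x : Fin b → ℝ) (y : Fin c → ℝ) :
    M.mulVec x ⬝ᵥ N.mulVec y = x ⬝ᵥ (Mᵀ * N).mulVec y := by
  rw [← Matrix.mulVec_mulVec]
  conv_rhs => rw [Matrix.dotProduct_mulVec, Matrix.vecMul_transpose]

private lemma dp_flip {a b : ℕ} (M : Matrix (Fin a) (Fin b) ℝ)
    (x : Fin a → ℝ) (y : Fin b → ℝ) :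
    x ⬝ᵥ M.mulVec y = y ⬝ᵥ Mᵀ.mulVec x := by
  rw [Matrix.dotProduct_mulVec, Matrix.mulVec_transpose, dotProduct_comm]

private lemma hasDerivAt_quadForm {n : ℕ} (P : Matrix (Fin n) (Fin n) ℝ)
    (e : ℝ → Fin n → ℝ) (e' : Fin n → ℝ) (t : ℝ)
    (h : ∀ i, HasDerivAt (fun s => e s i) (e' i) t) :
    HasDerivAt (fun s => e s ⬝ᵥ P.mulVec (e s))
      (e' ⬝ᵥ P.mulVec (e t) + e t ⬝ᵥ P.mulVec e') t := by
  have key : ∀ (x y : Fin n → ℝ), x ⬝ᵥ P.mulVec y = ∑ i, ∑ j, x i * (P i j * y j) := by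
    intro x y; simp [dotProduct, Matrix.mulVec, Finset.mul_sum]
  simp only [key]
  have hsum : (∑ i, ∑ j, e' i * (P i j * e t j)) + (∑ i, ∑ j, e t i * (P i j * e' j))
      = ∑ i, ∑ j, (e' i * (P i j * e t j) + e t i * (P i j * e' j)) := by
    rw [← Finset.sum_add_distrib]
    exact Finset.sum_congr rfl fun i _ => (Finset.sum_add_distrib).symm
  rw [hsum]
  exact HasDerivAt.fun_sum fun i _ => HasDerivAt.fun_sum fun j _ =>
    (h i).mul (((h j).const_mul (P i j)))

private lemma hasDerivAt_traceQuad {k m : ℕ} (G : Matrix (Fin k) (Fin k) ℝ)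
    (L : Matrix (Fin m) (Fin m) ℝ) (M : ℝ → Matrix (Fin k) (Fin m) ℝ)
    (M' : Matrix (Fin k) (Fin m) ℝ) (t : ℝ)
    (h : ∀ i j, HasDerivAt (fun s => M s i j) (M' i j) t) :
    HasDerivAt (fun s => ((M s)ᵀ * G * M s * L).trace)
      ((M'ᵀ * G * M t * L).trace + ((M t)ᵀ * G * M' * L).trace) t := by
  have key : ∀ (X Y : Matrix (Fin k) (Fin m) ℝ),
      (Xᵀ * G * Y * L).trace = ∑ j, ∑ c, ∑ b, ∑ a, X a j * G a b * (Y b c * L c j) := by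
    intro X Y
    simp [Matrix.trace, Matrix.mul_apply, Matrix.diag, Finset.sum_mul, mul_assoc]
  simp only [key]
  have hsum : (∑ j, ∑ c, ∑ b, ∑ a, M' a j * G a b * (M t b c * L c j))
      + (∑ j, ∑ c, ∑ b, ∑ a, M t a j * G a b * (M' b c * L c j))
      = ∑ j, ∑ c, ∑ b, ∑ a,
          (M' a j * G a b * (M t b c * L c j) + M t a j * G a b * (M' b c * L c j)) := by
    rw [← Finset.sum_add_distrib]
    refine Finset.sum_congr rfl fun j _ => ?_
    rw [← Finset.sum_add_distrib]
    refine Finset.sum_congr rfl fun c _ => ?_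
    rw [← Finset.sum_add_distrib]
    refine Finset.sum_congr rfl fun b _ => ?_
    exact (Finset.sum_add_distrib).symm
  rw [hsum]
  refine HasDerivAt.fun_sum fun j _ => HasDerivAt.fun_sum fun c _ => HasDerivAt.fun_sum fun b _ =>
    HasDerivAt.fun_sum fun a _ => ?_
  exact ((h a j).mul_const (G a b)).mul ((h b c).mul_const (L c j))

private lemma trace_rankOne {k m : ℕ} (w : Fin m → ℝ) (u : Fin k → ℝ)
    (N : Matrix (Fin k) (Fin m) ℝ) :
    ((Matrix.of (fun (i : Fin m) (j : Fin k) => w i * u j)) * N).trace = u ⬝ᵥ N.mulVec w := by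
  simp only [Matrix.trace, Matrix.diag, Matrix.mul_apply, Matrix.of_apply, dotProduct,
    Matrix.mulVec, Finset.mul_sum]
  rw [Finset.sum_comm]
  exact Finset.sum_congr rfl fun b _ => Finset.sum_congr rfl fun j _ => by ring

private lemma trace_swap {k m : ℕ} (G : Matrix (Fin k) (Fin k) ℝ)
    (L : Matrix (Fin m) (Fin m) ℝ) (hG : Gᵀ = G) (hL : Lᵀ = L)
    (X Y : Matrix (Fin k) (Fin m) ℝ) :
    (Xᵀ * G * Y * L).trace = (Yᵀ * G * X * L).trace := by
  calc (Xᵀ * G * Y * L).trace = ((Xᵀ * G * Y * L)ᵀ).trace := (Matrix.trace_transpose _).symm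
    _ = (L * (Yᵀ * G * X)).trace := by
        simp [Matrix.transpose_mul, hG, hL, Matrix.mul_assoc]
    _ = (Yᵀ * G * X * L).trace := Matrix.trace_mul_comm _ _

/-- Lyapunov derivative of the saturation-modified adaptive system: with the SPR
conditions `AᵀP + PA = −Q`, `PB = CᵀSᵀ` and the adaptive laws
`Ω̇ = −Γ_Ω ξ (SCe)ᵀ`, `Ω̇_Δ = Γ_Δ ξ_Δ (SCe)ᵀ`, the Lyapunov function
`V = eᵀPe + tr(Ω̃ᵀΓ_Ω⁻¹Ω̃Λ) + tr(Ω̃_ΔᵀΓ_Δ⁻¹Ω̃_Δ)` satisfies `V̇ = −eᵀQe ≤ 0`. -/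
theorem lyapunov_derivative {n m p k : ℕ}
    (A : Matrix (Fin n) (Fin n) ℝ) (B : Matrix (Fin n) (Fin m) ℝ)
    (C : Matrix (Fin p) (Fin n) ℝ) (S : Matrix (Fin m) (Fin p) ℝ)
    (P Q : Matrix (Fin n) (Fin n) ℝ) (Λ : Matrix (Fin m) (Fin m) ℝ)
    (ΓΩ ΓΔ : Matrix (Fin k) (Fin k) ℝ)
    (hP : P.PosDef) (hPsym : P.IsSymm) (hQ : Q.PosDef)
    (hLyap : Aᵀ * P + P * A = -Q) (hPB : P * B = Cᵀ * Sᵀ)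
    (hΛdiag : Λ.IsDiag) (hΛpos : ∀ i, 0 < Λ i i)
    (hΓΩ : ΓΩ.PosDef) (hΓΩsym : ΓΩ.IsSymm)
    (hΓΔ : ΓΔ.PosDef) (hΓΔsym : ΓΔ.IsSymm)
    (e : ℝ → Fin n → ℝ) (ξ ξΔ : ℝ → Fin k → ℝ)
    (Ωt ΩΔt : ℝ → Matrix (Fin k) (Fin m) ℝ)
    (he : ∀ t, HasDerivAt e
        (A.mulVec (e t) + B.mulVec ((Λ * (Ωt t)ᵀ).mulVec (ξ t))
          - B.mulVec ((ΩΔt t)ᵀ.mulVec (ξΔ t))) t)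
    (hΩ : ∀ i j t, HasDerivAt (fun s => Ωt s i j)
        (-(ΓΩ.mulVec (ξ t) i * (S * C).mulVec (e t) j)) t)
    (hΩΔ : ∀ i j t, HasDerivAt (fun s => ΩΔt s i j)
        (ΓΔ.mulVec (ξΔ t) i * (S * C).mulVec (e t) j) t)
    (V : ℝ → ℝ)
    (hV : ∀ t, V t = e t ⬝ᵥ P.mulVec (e t)
        + ((Ωt t)ᵀ * ΓΩ⁻¹ * Ωt t * Λ).trace
        + ((ΩΔt t)ᵀ * ΓΔ⁻¹ * ΩΔt t).trace) :
    ∀ t, HasDerivAt V (-(e t ⬝ᵥ Q.mulVec (e t))) t ∧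
      -(e t ⬝ᵥ Q.mulVec (e t)) ≤ 0 := by
  intro t
  have hQnn : -(e t ⬝ᵥ Q.mulVec (e t)) ≤ 0 := by
    have := hQ.posSemidef.dotProduct_mulVec_nonneg (e t)
    simp only [star_trivial] at this
    linarith
  refine ⟨?_, hQnn⟩
  -- notation
  set w : Fin m → ℝ := (S * C).mulVec (e t) with hw
  set u : Fin k → ℝ := ΓΩ.mulVec (ξ t) with hu
  set uΔ : Fin k → ℝ := ΓΔ.mulVec (ξΔ t) with huΔ
  set Ω : Matrix (Fin k) (Fin m) ℝ := Ωt t with hΩt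
  set ΩΔ : Matrix (Fin k) (Fin m) ℝ := ΩΔt t with hΩΔt
  set e' : Fin n → ℝ := A.mulVec (e t) + B.mulVec ((Λ * Ωᵀ).mulVec (ξ t))
      - B.mulVec (ΩΔᵀ.mulVec (ξΔ t)) with he'
  set Ω' : Matrix (Fin k) (Fin m) ℝ := Matrix.of (fun i j => -(u i * w j)) with hΩ'
  set ΩΔ' : Matrix (Fin k) (Fin m) ℝ := Matrix.of (fun i j => uΔ i * w j) with hΩΔ'
  -- invertibility and symmetry facts
  have hΓΩdet : IsUnit ΓΩ.det := hΓΩ.det_pos.ne'.isUnit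
  have hΓΔdet : IsUnit ΓΔ.det := hΓΔ.det_pos.ne'.isUnit
  have hGsym : (ΓΩ⁻¹)ᵀ = ΓΩ⁻¹ := by
    rw [Matrix.transpose_nonsing_inv, hΓΩsym]
  have hHsym : (ΓΔ⁻¹)ᵀ = ΓΔ⁻¹ := by
    rw [Matrix.transpose_nonsing_inv, hΓΔsym]
  have hΛsym : Λᵀ = Λ := hΛdiag.isSymm
  -- derivative of each piece
  have hd1 : HasDerivAt (fun s => e s ⬝ᵥ P.mulVec (e s))
      (e' ⬝ᵥ P.mulVec (e t) + e t ⬝ᵥ P.mulVec e') t :=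
    hasDerivAt_quadForm P e e' t (fun i => hasDerivAt_pi.1 (he t) i)
  have hd2 : HasDerivAt (fun s => ((Ωt s)ᵀ * ΓΩ⁻¹ * Ωt s * Λ).trace)
      ((Ω'ᵀ * ΓΩ⁻¹ * Ω * Λ).trace + (Ωᵀ * ΓΩ⁻¹ * Ω' * Λ).trace) t :=
    hasDerivAt_traceQuad ΓΩ⁻¹ Λ Ωt Ω' t (fun i j => hΩ i j t)
  have hd3 : HasDerivAt (fun s => ((ΩΔt s)ᵀ * ΓΔ⁻¹ * ΩΔt s * 1).trace)
      ((ΩΔ'ᵀ * ΓΔ⁻¹ * ΩΔ * 1).trace + (ΩΔᵀ * ΓΔ⁻¹ * ΩΔ' * 1).trace) t :=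
    hasDerivAt_traceQuad ΓΔ⁻¹ 1 ΩΔt ΩΔ' t (fun i j => hΩΔ i j t)
  -- scalar quantities
  set cΩ : ℝ := ξ t ⬝ᵥ (Ω * Λ).mulVec w with hcΩ
  set cΔ : ℝ := ξΔ t ⬝ᵥ ΩΔ.mulVec w with hcΔ
  -- trace term values
  have hBtP : Bᵀ * P = S * C := by
    have : (P * B)ᵀ = (Cᵀ * Sᵀ)ᵀ := by rw [hPB]
    simpa [Matrix.transpose_mul, hPsym.eq] using this
  have hkeyΩ : u ⬝ᵥ (ΓΩ⁻¹ * (Ω * Λ)).mulVec w = cΩ := by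
    rw [hu, dp_helper, hΓΩsym.eq, Matrix.mul_nonsing_inv_cancel_left _ _ hΓΩdet, hcΩ]
  have htr1 : (Ω'ᵀ * ΓΩ⁻¹ * Ω * Λ).trace = -cΩ := by
    have hT : Ω'ᵀ = -(Matrix.of (fun (i : Fin m) (j : Fin k) => w i * u j)) := by
      ext i j; simp [hΩ', Matrix.transpose_apply, mul_comm]
    rw [hT, Matrix.neg_mul, Matrix.neg_mul, Matrix.neg_mul, Matrix.trace_neg,
      Matrix.mul_assoc, Matrix.mul_assoc, trace_rankOne, hkeyΩ]
  have htr2 : (Ωᵀ * ΓΩ⁻¹ * Ω' * Λ).trace = -cΩ := by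
    rw [trace_swap _ _ hGsym hΛsym]; exact htr1
  have hkeyΔ : uΔ ⬝ᵥ (ΓΔ⁻¹ * ΩΔ).mulVec w = cΔ := by
    rw [huΔ, dp_helper, hΓΔsym.eq, Matrix.mul_nonsing_inv_cancel_left _ _ hΓΔdet, hcΔ]
  have htr3 : (ΩΔ'ᵀ * ΓΔ⁻¹ * ΩΔ * 1).trace = cΔ := by
    have hT : ΩΔ'ᵀ = Matrix.of (fun (i : Fin m) (j : Fin k) => w i * uΔ j) := by
      ext i j; simp [hΩΔ', Matrix.transpose_apply, mul_comm]
    rw [Matrix.mul_one, hT, Matrix.mul_assoc, trace_rankOne, hkeyΔ]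
  have htr4 : (ΩΔᵀ * ΓΔ⁻¹ * ΩΔ' * 1).trace = cΔ := by
    rw [trace_swap _ _ hHsym (Matrix.transpose_one)]; exact htr3
  -- quadratic form derivative value
  have hM1 : (P * B * (Λ * Ωᵀ))ᵀ = Ω * (Λ * (S * C)) := by
    have : Bᵀ * Pᵀ = S * C := by rw [hPsym.eq, hBtP]
    simp [Matrix.transpose_mul, hΛsym, Matrix.mul_assoc, this]
  have hcross1 : e t ⬝ᵥ P.mulVec (B.mulVec ((Λ * Ωᵀ).mulVec (ξ t))) = cΩ := by
    rw [Matrix.mulVec_mulVec, Matrix.mulVec_mulVec, dp_flip, hM1, hcΩ, hw,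
      Matrix.mulVec_mulVec, ← Matrix.mul_assoc]
  have hcross1' : B.mulVec ((Λ * Ωᵀ).mulVec (ξ t)) ⬝ᵥ P.mulVec (e t) = cΩ := by
    rw [dp_flip, hPsym.eq, ← hcross1, dotProduct_comm]
  have hM2 : (P * B * ΩΔᵀ)ᵀ = ΩΔ * (S * C) := by
    have : Bᵀ * Pᵀ = S * C := by rw [hPsym.eq, hBtP]
    simp [Matrix.transpose_mul, Matrix.mul_assoc, this]
  have hcross2 : e t ⬝ᵥ P.mulVec (B.mulVec (ΩΔᵀ.mulVec (ξΔ t))) = cΔ := by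
    rw [Matrix.mulVec_mulVec, Matrix.mulVec_mulVec, dp_flip, hM2, hcΔ, hw,
      Matrix.mulVec_mulVec]
  have hcross2' : B.mulVec (ΩΔᵀ.mulVec (ξΔ t)) ⬝ᵥ P.mulVec (e t) = cΔ := by
    rw [dp_flip, hPsym.eq, ← hcross2, dotProduct_comm]
  have hlyapterm : A.mulVec (e t) ⬝ᵥ P.mulVec (e t) + e t ⬝ᵥ P.mulVec (A.mulVec (e t))
      = -(e t ⬝ᵥ Q.mulVec (e t)) := by
    rw [dp_helper, Matrix.mulVec_mulVec, ← dotProduct_add, ← Matrix.add_mulVec, hLyap,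
      Matrix.neg_mulVec, dotProduct_neg]
  have hd1val : e' ⬝ᵥ P.mulVec (e t) + e t ⬝ᵥ P.mulVec e'
      = -(e t ⬝ᵥ Q.mulVec (e t)) + 2 * cΩ - 2 * cΔ := by
    rw [he', Matrix.mulVec_sub, Matrix.mulVec_add, sub_dotProduct, add_dotProduct,
      dotProduct_sub, dotProduct_add]
    linarith [hlyapterm, hcross1, hcross1', hcross2, hcross2']
  -- assemble
  have hVeq : V = fun s => e s ⬝ᵥ P.mulVec (e s)
      + ((Ωt s)ᵀ * ΓΩ⁻¹ * Ωt s * Λ).trace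
      + ((ΩΔt s)ᵀ * ΓΔ⁻¹ * ΩΔt s * 1).trace := by
    funext s; rw [hV s, Matrix.mul_one]
  rw [hVeq]
  have htotal := (hd1.add hd2).add hd3
  have hval : (e' ⬝ᵥ P.mulVec (e t) + e t ⬝ᵥ P.mulVec e')
      + ((Ω'ᵀ * ΓΩ⁻¹ * Ω * Λ).trace + (Ωᵀ * ΓΩ⁻¹ * Ω' * Λ).trace)
      + ((ΩΔ'ᵀ * ΓΔ⁻¹ * ΩΔ * 1).trace + (ΩΔᵀ * ΓΔ⁻¹ * ΩΔ' * 1).trace)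
      = -(e t ⬝ᵥ Q.mulVec (e t)) := by
    rw [hd1val, htr1, htr2, htr3, htr4]; ring
  rw [← hval]
  exact htotal
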